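/- Let φ: ℝ → ℝ be any function. For v_h ∈ X_h with element gradients V'_k, define the exact stored energy E(v_h) = Σ_{ℓ=−N+1}^N ε φ(v'_{h,ℓ}) = Σ_{k=−K+1}^K h_k φ(V'_k) and the node-based (non-local QC) energy E_h(v_h) = Σ_{k=−K+1}^K ω_k · ½(φ(V'_k) + φ(V'_{k+1})) with weights ω_k = ½(h_k + h_{k+1}). Then ½(ω_k + ω_{k−1}) = h_k(1 + ω̂_k) with ω̂_k = (h_{k−1} − 2h_k + h_{k+1})/(4h_k), and consequently E_h(v_h) = E(v_h) + Σ_{k=−K+1}^K h_k ω̂_k φ(V'_k). -/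

import Mathlib

/-- `v : ℤ → ℝ` belongs to the coarse space `X_h`. -/
def IsCoarse (N : ℤ) (ε : ℝ) (L : ℤ → ℤ) (v : ℤ → ℝ) : Prop :=
  (∀ l : ℤ, v (l + 2 * N) = v l) ∧ v 0 = 0 ∧
    ∀ k l : ℤ, L (k - 1) ≤ l → l ≤ L k →
      v l = v (L (k - 1)) +
        ε * ((l - L (k - 1) : ℤ) : ℝ) *
          ((v (L k) - v (L (k - 1))) / (ε * ((L k - L (k - 1) : ℤ) : ℝ)))

lemma sum_Ioc_cons (f : ℤ → ℝ) {a b c : ℤ} (hab : a ≤ b) (hbc : b ≤ c) :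
    (∑ l ∈ Finset.Ioc a b, f l) + ∑ l ∈ Finset.Ioc b c, f l = ∑ l ∈ Finset.Ioc a c, f l := by
  have hd : Disjoint (Finset.Ioc a b) (Finset.Ioc b c) := by
    rw [Finset.disjoint_left]
    intro x hx hx'
    simp only [Finset.mem_Ioc] at hx hx'
    omega
  rw [← Finset.sum_union hd, Finset.Ioc_union_Ioc_eq_Ioc hab hbc]

lemma sum_Ioc_shift (f : ℤ → ℝ) (T : ℤ) (hT : 0 ≤ T) (hf : ∀ l, f (l + T) = f l) (a : ℤ) :
    ∑ l ∈ Finset.Ioc a (a + T), f l = ∑ l ∈ Finset.Ioc 0 T, f l := by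
  have key : ∀ b : ℤ, ∑ l ∈ Finset.Ioc (b + 1) (b + 1 + T), f l
      = ∑ l ∈ Finset.Ioc b (b + T), f l := by
    intro b
    have h1 := sum_Ioc_cons f (show b ≤ b + 1 by omega)
      (show b + 1 ≤ b + 1 + T by omega)
    have h2 := sum_Ioc_cons f (show b ≤ b + T by omega)
      (show b + T ≤ b + 1 + T by omega)
    have e1 : Finset.Ioc b (b + 1) = {b + 1} := by ext x; simp; omega
    have e2 : Finset.Ioc (b + T) (b + 1 + T) = {b + 1 + T} := by ext x; simp; omega
    have e3 : f (b + 1 + T) = f (b + 1) := by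
      rw [show b + 1 + T = (b + 1) + T by ring, hf]
    rw [e1, Finset.sum_singleton] at h1
    rw [e2, Finset.sum_singleton, e3] at h2
    linarith
  induction a using Int.induction_on with
  | zero => norm_num
  | succ n ih => rw [key (n : ℤ)]; exact ih
  | pred n ih =>
    have h := key (-(n : ℤ) - 1)
    rw [← h, show -(n : ℤ) - 1 + 1 = -(n : ℤ) by ring]
    exact ih

/-- the node-based (non-local QC) energy satisfies
`½(ω_k + ω_{k−1}) = h_k (1 + ω̂_k)` and
`E_h(v_h) = E(v_h) + Σ_k h_k ω̂_k φ(V'_k)`, where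
`E(v_h) = Σ_l ε φ(v'_l) = Σ_k h_k φ(V'_k)`. -/
theorem statement6
    (N K : ℤ) (hN : 1 ≤ N) (hK : 1 ≤ K)
    (ε : ℝ) (hε : ε = (N : ℝ)⁻¹)
    (L : ℤ → ℤ) (hmono : StrictMono L) (hL0 : L 0 = 0)
    (hLper : ∀ k : ℤ, L (k + 2 * K) = L k + 2 * N)
    (hsz : ℤ → ℝ) (hhsz : ∀ k : ℤ, hsz k = ε * ((L k - L (k - 1) : ℤ) : ℝ))
    (φ : ℝ → ℝ)
    (v : ℤ → ℝ) (hv : IsCoarse N ε L v)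
    (Vp : ℤ → ℝ) (hVp : ∀ k : ℤ, Vp k = (v (L k) - v (L (k - 1))) / hsz k)
    (ω : ℤ → ℝ) (hω : ∀ k : ℤ, ω k = (hsz k + hsz (k + 1)) / 2)
    (oh : ℤ → ℝ)
    (hoh : ∀ k : ℤ, oh k = (hsz (k - 1) - 2 * hsz k + hsz (k + 1)) / (4 * hsz k)) :
    (∀ k : ℤ, (ω k + ω (k - 1)) / 2 = hsz k * (1 + oh k)) ∧
    (∑ l ∈ Finset.Icc (-N + 1) N, ε * φ (ε⁻¹ * (v l - v (l - 1))) =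
      ∑ k ∈ Finset.Icc (-K + 1) K, hsz k * φ (Vp k)) ∧
    (∑ k ∈ Finset.Icc (-K + 1) K, ω k * ((φ (Vp k) + φ (Vp (k + 1))) / 2) =
      (∑ k ∈ Finset.Icc (-K + 1) K, hsz k * φ (Vp k)) +
        ∑ k ∈ Finset.Icc (-K + 1) K, hsz k * oh k * φ (Vp k)) := by
  have hNpos : (0 : ℝ) < (N : ℝ) := by exact_mod_cast (by omega : (0:ℤ) < N)
  have hεpos : 0 < ε := by rw [hε]; positivity
  have hszpos : ∀ k : ℤ, 0 < hsz k := by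
    intro k
    rw [hhsz]
    have h1 : L (k - 1) < L k := hmono (by omega)
    have h2 : (0 : ℝ) < ((L k - L (k - 1) : ℤ) : ℝ) := by exact_mod_cast (by omega : (0:ℤ) < L k - L (k-1))
    exact mul_pos hεpos h2
  -- periodicity helpers
  have hszper : ∀ k : ℤ, hsz (k + 2 * K) = hsz k := by
    intro k
    rw [hhsz, hhsz]
    have h2 := hLper (k - 1)
    have e : L (k + 2 * K) - L (k + 2 * K - 1) = L k - L (k - 1) := by
      rw [show k + 2 * K - 1 = (k - 1) + 2 * K by ring, h2, hLper k]; ring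
    rw [e]
  have hVpper : ∀ k : ℤ, Vp (k + 2 * K) = Vp k := by
    intro k
    rw [hVp, hVp, hszper]
    have e1 : v (L (k + 2 * K)) = v (L k) := by rw [hLper k, hv.1]
    have e2 : v (L (k + 2 * K - 1)) = v (L (k - 1)) := by
      rw [show k + 2 * K - 1 = (k - 1) + 2 * K by ring, hLper (k - 1), hv.1]
    rw [e1, e2]
  have hωper : ∀ k : ℤ, ω (k + 2 * K) = ω k := by
    intro k
    rw [hω, hω, hszper,
      show k + 2 * K + 1 = (k + 1) + 2 * K by ring, hszper]
  -- part 1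
  have part1 : ∀ k : ℤ, (ω k + ω (k - 1)) / 2 = hsz k * (1 + oh k) := by
    intro k
    have hne := (hszpos k).ne'
    rw [hω k, hω (k - 1), hoh k, show k - 1 + 1 = k by ring]
    field_simp
    ring
  -- block sum
  have block : ∀ k : ℤ, ∑ l ∈ Finset.Ioc (L (k - 1)) (L k),
      (ε * φ (ε⁻¹ * (v l - v (l - 1)))) = hsz k * φ (Vp k) := by
    intro k
    have hLlt : L (k - 1) < L k := hmono (by omega)
    have hconst : ∀ l ∈ Finset.Ioc (L (k - 1)) (L k),
        ε * φ (ε⁻¹ * (v l - v (l - 1))) = ε * φ (Vp k) := by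
      intro l hl
      simp only [Finset.mem_Ioc] at hl
      have h1 := hv.2.2 k l (by omega) hl.2
      have h2 := hv.2.2 k (l - 1) (by omega) (by omega)
      have hdiff : v l - v (l - 1) = ε * Vp k := by
        rw [h1, h2, hVp k, hhsz k]
        push_cast
        ring
      rw [hdiff, inv_mul_cancel_left₀ (ne_of_gt hεpos)]
    rw [Finset.sum_congr rfl hconst, Finset.sum_const, Int.card_Ioc]
    have hnn : (0 : ℤ) ≤ L k - L (k - 1) := by omega
    have hcast : ((L k - L (k - 1)).toNat : ℝ) = ((L k - L (k - 1) : ℤ) : ℝ) := by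
      exact_mod_cast congrArg (Int.cast : ℤ → ℝ) (Int.toNat_of_nonneg hnn)
    rw [nsmul_eq_mul, hcast, hhsz k]
    push_cast
    ring
  -- partition
  have partition : ∀ m : ℤ, -K ≤ m →
      ∑ l ∈ Finset.Ioc (L (-K)) (L m), (ε * φ (ε⁻¹ * (v l - v (l - 1)))) =
        ∑ k ∈ Finset.Icc (-K + 1) m, hsz k * φ (Vp k) := by
    refine Int.le_induction ?_ ?_
    · rw [Finset.Ioc_self, Finset.Icc_eq_empty (by omega)]
      simp
    · intro m hm ih
      have hsplit := sum_Ioc_cons (fun l => ε * φ (ε⁻¹ * (v l - v (l - 1))))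
        (show L (-K) ≤ L m from hmono.monotone hm) (show L m ≤ L (m + 1) from (hmono (by omega)).le)
      rw [← hsplit, ih]
      have e : Finset.Icc (-K + 1) (m + 1) = insert (m + 1) (Finset.Icc (-K + 1) m) := by
        ext x; simp [Finset.mem_Icc]; omega
      rw [e, Finset.sum_insert (by simp only [Finset.mem_Icc]; omega)]
      have hb := block (m + 1)
      rw [show m + 1 - 1 = m by ring] at hb
      rw [hb]
      ring
  -- part 2
  have hIccIoc : Finset.Icc (-N + 1) N = Finset.Ioc (-N) N := by
    ext x; simp [Finset.mem_Icc, Finset.mem_Ioc]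
  have hfper : ∀ l : ℤ, (fun l => ε * φ (ε⁻¹ * (v l - v (l - 1)))) (l + 2 * N)
      = (fun l => ε * φ (ε⁻¹ * (v l - v (l - 1)))) l := by
    intro l
    simp only []
    rw [hv.1 l, show l + 2 * N - 1 = (l - 1) + 2 * N by ring, hv.1 (l - 1)]
  have part2 : ∑ l ∈ Finset.Icc (-N + 1) N, ε * φ (ε⁻¹ * (v l - v (l - 1))) =
      ∑ k ∈ Finset.Icc (-K + 1) K, hsz k * φ (Vp k) := by
    rw [hIccIoc]
    have hT : (0 : ℤ) ≤ 2 * N := by omega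
    have s1 := sum_Ioc_shift (fun l => ε * φ (ε⁻¹ * (v l - v (l - 1)))) (2 * N) hT hfper (-N)
    have s2 := sum_Ioc_shift (fun l => ε * φ (ε⁻¹ * (v l - v (l - 1)))) (2 * N) hT hfper (L (-K))
    have e2 : L (-K) + 2 * N = L K := by
      have := hLper (-K)
      rw [show -K + 2 * K = K by ring] at this
      omega
    rw [show -N + 2 * N = N by ring] at s1
    rw [e2] at s2
    rw [s1, ← s2]
    exact partition K (by omega)
  -- part 3
  have shift : ∑ k ∈ Finset.Icc (-K + 1) K, ω k * φ (Vp (k + 1)) =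
      ∑ k ∈ Finset.Icc (-K + 1) K, ω (k - 1) * φ (Vp k) := by
    have hmap : ∑ k ∈ Finset.Icc (-K + 1 + 1) (K + 1), (ω (k - 1) * φ (Vp k)) =
        ∑ k ∈ Finset.Icc (-K + 1) K, ω k * φ (Vp (k + 1)) := by
      rw [← Finset.map_add_right_Icc, Finset.sum_map]
      apply Finset.sum_congr rfl
      intro k _
      simp [addRightEmbedding]
    have e1 : Finset.Icc (-K + 1 + 1) (K + 1) = insert (K + 1) (Finset.Icc (-K + 2) K) := by
      ext x; simp [Finset.mem_Icc]; omega
    have e2 : Finset.Icc (-K + 1) K = insert (-K + 1) (Finset.Icc (-K + 2) K) := by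
      ext x; simp [Finset.mem_Icc]; omega
    have hterm : ω (K + 1 - 1) * φ (Vp (K + 1)) = ω (-K + 1 - 1) * φ (Vp (-K + 1)) := by
      have hv1 : Vp (K + 1) = Vp (-K + 1) := by
        have := hVpper (-K + 1)
        rw [show -K + 1 + 2 * K = K + 1 by ring] at this
        rw [this]
      have hw1 : ω (K + 1 - 1) = ω (-K + 1 - 1) := by
        have := hωper (-K + 1 - 1)
        rw [show -K + 1 - 1 + 2 * K = K + 1 - 1 by ring] at this
        rw [this]
      rw [hv1, hw1]
    rw [← hmap, e1, e2, Finset.sum_insert (by simp only [Finset.mem_Icc]; omega),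
      Finset.sum_insert (by simp only [Finset.mem_Icc]; omega), hterm]
  refine ⟨part1, part2, ?_⟩
  calc ∑ k ∈ Finset.Icc (-K + 1) K, ω k * ((φ (Vp k) + φ (Vp (k + 1))) / 2)
      = ∑ k ∈ Finset.Icc (-K + 1) K,
          (ω k * φ (Vp k) / 2 + ω k * φ (Vp (k + 1)) / 2) :=
        Finset.sum_congr rfl (fun k _ => by ring)
    _ = (∑ k ∈ Finset.Icc (-K + 1) K, ω k * φ (Vp k) / 2) +
          ∑ k ∈ Finset.Icc (-K + 1) K, ω k * φ (Vp (k + 1)) / 2 := Finset.sum_add_distrib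
    _ = (∑ k ∈ Finset.Icc (-K + 1) K, ω k * φ (Vp k) / 2) +
          ∑ k ∈ Finset.Icc (-K + 1) K, ω (k - 1) * φ (Vp k) / 2 := by
        have hs : ∑ k ∈ Finset.Icc (-K + 1) K, ω k * φ (Vp (k + 1)) / 2 =
            ∑ k ∈ Finset.Icc (-K + 1) K, ω (k - 1) * φ (Vp k) / 2 := by
          rw [← Finset.sum_div, ← Finset.sum_div, shift]
        rw [hs]
    _ = ∑ k ∈ Finset.Icc (-K + 1) K, ((ω k + ω (k - 1)) / 2) * φ (Vp k) := by
        rw [← Finset.sum_add_distrib]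
        exact Finset.sum_congr rfl (fun k _ => by ring)
    _ = ∑ k ∈ Finset.Icc (-K + 1) K, (hsz k * φ (Vp k) + hsz k * oh k * φ (Vp k)) :=
        Finset.sum_congr rfl (fun k _ => by rw [part1 k]; ring)
    _ = (∑ k ∈ Finset.Icc (-K + 1) K, hsz k * φ (Vp k)) +
          ∑ k ∈ Finset.Icc (-K + 1) K, hsz k * oh k * φ (Vp k) := Finset.sum_add_distrib
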